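/- Fix real numbers T > 0 and a ∈ (0,1). There exist constants 0 < k₁ ≤ k₂, depending only on T and a, such that for every b ≥ 0: k₁·(1+b)^{a−1} ≤ ∫₀ᵀ s^{−a}·exp(−2sb) ds ≤ k₂·(1+b)^{a−1}. -/

import Mathlib

open MeasureTheory Set

/-- `e^{-x} ≤ 4/x²` for `x > 0`. -/
lemma aux_exp_neg_le (x : ℝ) (hx : 0 < x) : Real.exp (-x) ≤ 4 / x ^ 2 := by
  have h1 : x / 2 ≤ Real.exp (x / 2) := by
    nlinarith [Real.add_one_le_exp (x / 2)]
  have h3 : Real.exp (x / 2) ^ 2 = Real.exp x := by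
    rw [sq, ← Real.exp_add]; ring_nf
  have h4 : x ^ 2 ≤ 4 * Real.exp x := by nlinarith
  have h5 : Real.exp (-x) * Real.exp x = 1 := by
    rw [← Real.exp_add]; simp
  rw [le_div_iff₀ (by positivity)]
  nlinarith [Real.exp_pos (-x), Real.exp_pos x]

/-- value of `∫ s in Ioc 0 u, s ^ (-a)` -/
lemma aux_rpow_integral (a u : ℝ) (ha1 : a < 1) (hu : 0 < u) :
    ∫ s in Ioc (0 : ℝ) u, s ^ (-a) = u ^ (1 - a) / (1 - a) := by
  rw [← intervalIntegral.integral_of_le hu.le,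
    integral_rpow (Or.inl (by linarith))]
  rw [Real.zero_rpow (by intro h; nlinarith [h] : (-a + 1 : ℝ) ≠ 0)]
  norm_num
  ring_nf

lemma aux_rpow_integrableOn (a u : ℝ) (ha1 : a < 1) :
    IntegrableOn (fun s : ℝ => s ^ (-a)) (Ioc (0 : ℝ) u) :=
  (intervalIntegral.intervalIntegrable_rpow' (a := 0) (b := u) (by linarith)).1

/-- Lemma A.2: for fixed `T > 0` and `a ∈ (0,1)`,
`∫₀ᵀ s^{-a} exp(-2sb) ds ≍ (1+b)^{a-1}` uniformly in `b ≥ 0`. -/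
theorem stmt_1 (T a : ℝ) (hT : 0 < T) (ha : a ∈ Ioo (0 : ℝ) 1) :
    ∃ k₁ k₂ : ℝ, 0 < k₁ ∧ k₁ ≤ k₂ ∧ ∀ b : ℝ, 0 ≤ b →
      ENNReal.ofReal (k₁ * (1 + b) ^ (a - 1)) ≤
          (∫⁻ s in Ioc (0 : ℝ) T,
            ENNReal.ofReal (s ^ (-a) * Real.exp (-2 * s * b))) ∧
        (∫⁻ s in Ioc (0 : ℝ) T,
            ENNReal.ofReal (s ^ (-a) * Real.exp (-2 * s * b))) ≤
          ENNReal.ofReal (k₂ * (1 + b) ^ (a - 1)) := by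
  obtain ⟨ha0, ha1⟩ := ha
  have h1a : 0 < 1 - a := by linarith
  set k₁ : ℝ := Real.exp (-2) * (min T 1) ^ (1 - a) / (1 - a) with hk₁
  set k₂ : ℝ := max (1 / (1 - a) + 4 / (a + 1)) (2 * T ^ (1 - a) / (1 - a)) with hk₂
  have hminpos : (0 : ℝ) < min T 1 := lt_min hT one_pos
  have hk₁pos : 0 < k₁ := by
    apply div_pos _ h1a
    positivity
  have hk₁le : k₁ ≤ k₂ := by
    have h1 : Real.exp (-2) * (min T 1) ^ (1 - a) ≤ 1 := by
      have e1 : Real.exp (-2) ≤ 1 := Real.exp_le_one_iff.2 (by norm_num)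
      have e2 : (min T 1) ^ (1 - a) ≤ 1 :=
        Real.rpow_le_one hminpos.le (min_le_right T 1) h1a.le
      nlinarith [Real.exp_pos (-2), Real.rpow_pos_of_pos hminpos (1 - a)]
    have h2 : k₁ ≤ 1 / (1 - a) := by
      rw [hk₁, div_le_div_iff₀ h1a h1a]
      nlinarith
    have h3 : 1 / (1 - a) ≤ 1 / (1 - a) + 4 / (a + 1) := by
      have : 0 < 4 / (a + 1) := by positivity
      linarith
    exact le_trans (le_trans h2 h3) (le_max_left _ _)
  refine ⟨k₁, k₂, hk₁pos, hk₁le, fun b hb => ?_⟩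
  set c : ℝ := 1 + b with hcdef
  have hc0 : (0 : ℝ) < c := by positivity
  have hcpow : 0 < c ^ (a - 1) := Real.rpow_pos_of_pos hc0 _
  have hcinv : (1 / c : ℝ) ^ (1 - a) = c ^ (a - 1) := by
    rw [Real.div_rpow zero_le_one hc0.le, Real.one_rpow,
      show (a - 1 : ℝ) = -(1 - a) by ring, Real.rpow_neg hc0.le, one_div]
  set f : ℝ → ℝ := fun s => s ^ (-a) * Real.exp (-2 * s * b) with hf
  -- pointwise bounds
  have hf_nonneg : ∀ s : ℝ, 0 < s → 0 ≤ f s := fun s hs => by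
    have := Real.rpow_nonneg hs.le (-a); positivity
  have hf_le_g : ∀ s : ℝ, 0 < s → f s ≤ s ^ (-a) := fun s hs => by
    have h1 : Real.exp (-2 * s * b) ≤ 1 := by
      rw [Real.exp_le_one_iff]; nlinarith
    have h2 : (0:ℝ) ≤ s ^ (-a) := Real.rpow_nonneg hs.le _
    have h3 := mul_le_mul_of_nonneg_left h1 h2
    rw [mul_one] at h3; exact h3
  -- measurability and integrability
  have hmeas : Measurable f := by
    rw [hf]; fun_prop
  have hfint : ∀ u : ℝ, IntegrableOn f (Ioc (0:ℝ) u) := by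
    intro u
    apply Integrable.mono' (aux_rpow_integrableOn a u ha1)
      hmeas.aestronglyMeasurable.restrict
    filter_upwards [ae_restrict_mem measurableSet_Ioc] with s hs
    rw [Real.norm_eq_abs, abs_of_nonneg (hf_nonneg s hs.1)]
    exact hf_le_g s hs.1
  -- reduce to real integrals
  have hkey : (∫⁻ s in Ioc (0 : ℝ) T,
      ENNReal.ofReal (s ^ (-a) * Real.exp (-2 * s * b)))
      = ENNReal.ofReal (∫ s in Ioc (0:ℝ) T, f s) := by
    rw [← ofReal_integral_eq_lintegral_ofReal (hfint T)]
    filter_upwards [ae_restrict_mem measurableSet_Ioc] with s hs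
    exact hf_nonneg s hs.1
  rw [hkey]
  constructor
  · -- lower bound
    apply ENNReal.ofReal_le_ofReal
    set u : ℝ := min T (1 / c) with hudef
    have hu0 : 0 < u := lt_min hT (by positivity)
    have huT : u ≤ T := min_le_left _ _
    have huc : u ≤ 1 / c := min_le_right _ _
    have step1 : ∫ s in Ioc (0:ℝ) u, f s ≤ ∫ s in Ioc (0:ℝ) T, f s := by
      apply setIntegral_mono_set (hfint T)
      · filter_upwards [ae_restrict_mem measurableSet_Ioc] with s hs
        exact hf_nonneg s hs.1
      · exact (Ioc_subset_Ioc_right huT).eventuallyLE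
    have step2 : ∫ s in Ioc (0:ℝ) u, Real.exp (-2) * s ^ (-a)
        ≤ ∫ s in Ioc (0:ℝ) u, f s := by
      apply setIntegral_mono_on
        ((aux_rpow_integrableOn a u ha1).const_mul _)
        ((hfint T).mono_set (Ioc_subset_Ioc_right huT)) measurableSet_Ioc
      intro s hs
      have hs0 : 0 < s := hs.1
      have hexp : Real.exp (-2) ≤ Real.exp (-2 * s * b) := by
        apply Real.exp_le_exp.2
        have h1 : s * b ≤ u * b := mul_le_mul_of_nonneg_right hs.2 hb
        have h2 : u * b ≤ (1 / c) * b := mul_le_mul_of_nonneg_right huc hb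
        have h3 : (1 / c) * b ≤ 1 := by
          rw [div_mul_eq_mul_div, one_mul, div_le_one hc0]; linarith
        have hsb : s * b ≤ 1 := (h1.trans h2).trans h3
        nlinarith [hsb]
      have hra : (0:ℝ) ≤ s ^ (-a) := Real.rpow_nonneg hs0.le _
      calc Real.exp (-2) * s ^ (-a) = s ^ (-a) * Real.exp (-2) := by ring
        _ ≤ s ^ (-a) * Real.exp (-2 * s * b) := mul_le_mul_of_nonneg_left hexp hra
    have step3 : ∫ s in Ioc (0:ℝ) u, Real.exp (-2) * s ^ (-a)
        = Real.exp (-2) * (u ^ (1 - a) / (1 - a)) := by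
      rw [integral_const_mul, aux_rpow_integral a u ha1 hu0]
    have step4 : k₁ * c ^ (a - 1) ≤ Real.exp (-2) * (u ^ (1 - a) / (1 - a)) := by
      have hmin : min T 1 / c ≤ u := by
        apply le_min
        · exact le_trans (div_le_self hminpos.le (by linarith)) (min_le_left T 1)
        · gcongr
          exact min_le_right T 1
      have hval : (min T 1 / c) ^ (1 - a) = (min T 1) ^ (1 - a) * c ^ (a - 1) := by
        rw [Real.div_rpow hminpos.le hc0.le,
          show (a - 1 : ℝ) = -(1 - a) by ring, Real.rpow_neg hc0.le, div_eq_mul_inv]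
      have hru : (min T 1) ^ (1 - a) * c ^ (a - 1) ≤ u ^ (1 - a) := by
        rw [← hval]
        exact Real.rpow_le_rpow (by positivity) hmin h1a.le
      have hre : k₁ * c ^ (a - 1)
          = Real.exp (-2) * ((min T 1) ^ (1 - a) * c ^ (a - 1)) / (1 - a) := by
        rw [hk₁]; ring
      rw [hre, show Real.exp (-2) * (u ^ (1 - a) / (1 - a))
        = Real.exp (-2) * u ^ (1 - a) / (1 - a) by ring]
      gcongr
    calc k₁ * c ^ (a - 1) ≤ Real.exp (-2) * (u ^ (1 - a) / (1 - a)) := step4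
      _ = ∫ s in Ioc (0:ℝ) u, Real.exp (-2) * s ^ (-a) := step3.symm
      _ ≤ ∫ s in Ioc (0:ℝ) u, f s := step2
      _ ≤ ∫ s in Ioc (0:ℝ) T, f s := step1
  · -- upper bound
    apply ENNReal.ofReal_le_ofReal
    rcases le_total b 1 with hble | hbge
    · -- small b
      have step1 : ∫ s in Ioc (0:ℝ) T, f s ≤ ∫ s in Ioc (0:ℝ) T, s ^ (-a) := by
        apply setIntegral_mono_on (hfint T) (aux_rpow_integrableOn a T ha1)
          measurableSet_Ioc
        intro s hs; exact hf_le_g s hs.1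
      have step2 : ∫ s in Ioc (0:ℝ) T, (s:ℝ) ^ (-a) = T ^ (1 - a) / (1 - a) :=
        aux_rpow_integral a T ha1 hT
      have step3 : T ^ (1 - a) / (1 - a) ≤ (2 * T ^ (1 - a) / (1 - a)) * c ^ (a - 1) := by
        have hc2 : c ≤ 2 := by rw [hcdef]; linarith
        have h1 : c ^ (1 - a) ≤ 2 := by
          calc c ^ (1 - a) ≤ 2 ^ (1 - a) :=
                Real.rpow_le_rpow hc0.le hc2 h1a.le
            _ ≤ 2 ^ (1:ℝ) := Real.rpow_le_rpow_of_exponent_le one_le_two (by linarith)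
            _ = 2 := Real.rpow_one 2
        have h2 : 1 ≤ 2 * c ^ (a - 1) := by
          have hmul : c ^ (1 - a) * c ^ (a - 1) = 1 := by
            rw [← Real.rpow_add hc0]; norm_num
          nlinarith
        have hpos : (0:ℝ) ≤ T ^ (1 - a) / (1 - a) := by positivity
        calc T ^ (1 - a) / (1 - a) = (T ^ (1 - a) / (1 - a)) * 1 := by ring
          _ ≤ (T ^ (1 - a) / (1 - a)) * (2 * c ^ (a - 1)) :=
              mul_le_mul_of_nonneg_left h2 hpos
          _ = (2 * T ^ (1 - a) / (1 - a)) * c ^ (a - 1) := by ring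
      have step4 : 2 * T ^ (1 - a) / (1 - a) ≤ k₂ := le_max_right _ _
      calc ∫ s in Ioc (0:ℝ) T, f s ≤ T ^ (1 - a) / (1 - a) := step2 ▸ step1
        _ ≤ (2 * T ^ (1 - a) / (1 - a)) * c ^ (a - 1) := step3
        _ ≤ k₂ * c ^ (a - 1) := mul_le_mul_of_nonneg_right step4 hcpow.le
    · -- large b
      have hc2 : (2:ℝ) ≤ c := by rw [hcdef]; linarith
      set u : ℝ := min T (1 / c) with hudef
      have hu0 : 0 < u := lt_min hT (by positivity)
      have huT : u ≤ T := min_le_left _ _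
      have huc : u ≤ 1 / c := min_le_right _ _
      have hsplit : ∫ s in Ioc (0:ℝ) T, f s
          = (∫ s in Ioc (0:ℝ) u, f s) + ∫ s in Ioc u T, f s := by
        rw [← Set.Ioc_union_Ioc_eq_Ioc hu0.le huT,
          setIntegral_union (Set.Ioc_disjoint_Ioc_of_le le_rfl) measurableSet_Ioc
            ((hfint T).mono_set (Ioc_subset_Ioc_right huT))
            ((hfint T).mono_set (Ioc_subset_Ioc_left hu0.le))]
      have piece1 : ∫ s in Ioc (0:ℝ) u, f s ≤ (1 / (1 - a)) * c ^ (a - 1) := by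
        have s1 : ∫ s in Ioc (0:ℝ) u, f s ≤ ∫ s in Ioc (0:ℝ) u, s ^ (-a) := by
          apply setIntegral_mono_on ((hfint T).mono_set (Ioc_subset_Ioc_right huT))
            (aux_rpow_integrableOn a u ha1) measurableSet_Ioc
          intro s hs; exact hf_le_g s hs.1
        have s2 : ∫ s in Ioc (0:ℝ) u, (s:ℝ) ^ (-a) = u ^ (1 - a) / (1 - a) :=
          aux_rpow_integral a u ha1 hu0
        have s3 : u ^ (1 - a) ≤ c ^ (a - 1) := by
          rw [← hcinv]
          exact Real.rpow_le_rpow hu0.le huc h1a.le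
        calc ∫ s in Ioc (0:ℝ) u, f s ≤ u ^ (1 - a) / (1 - a) := s2 ▸ s1
          _ ≤ c ^ (a - 1) / (1 - a) := by gcongr
          _ = (1 / (1 - a)) * c ^ (a - 1) := by ring
      have piece2 : ∫ s in Ioc u T, f s ≤ (4 / (a + 1)) * c ^ (a - 1) := by
        rcases le_or_gt T (1 / c) with hTc | hTc
        · have hu : u = T := min_eq_left hTc
          rw [hu, Set.Ioc_self, Measure.restrict_empty, integral_zero_measure]
          positivity
        · have hu : u = 1 / c := min_eq_right hTc.le
          have hinvc : (0:ℝ) < 1 / c := by positivity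
          -- pointwise bound on Ioc (1/c) T
          have hpt : ∀ s ∈ Ioc u T, f s ≤ 4 * (c ^ 2)⁻¹ * s ^ (-a - 2) := by
            intro s hs
            have hs0 : 0 < s := lt_trans (hu ▸ hinvc) hs.1
            have h1 : Real.exp (-2 * s * b) ≤ Real.exp (-(s * c)) := by
              apply Real.exp_le_exp.2
              have h : s * c ≤ s * (2 * b) := by
                apply mul_le_mul_of_nonneg_left _ hs0.le
                rw [hcdef]; linarith
              nlinarith [h]
            have h2 : Real.exp (-(s * c)) ≤ 4 / (s * c) ^ 2 :=
              aux_exp_neg_le (s * c) (by positivity)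
            have hra : (0:ℝ) ≤ s ^ (-a) := Real.rpow_nonneg hs0.le _
            have h3 : f s ≤ s ^ (-a) * (4 / (s * c) ^ 2) := by
              calc f s ≤ s ^ (-a) * Real.exp (-(s * c)) :=
                    mul_le_mul_of_nonneg_left h1 hra
                _ ≤ s ^ (-a) * (4 / (s * c) ^ 2) :=
                    mul_le_mul_of_nonneg_left h2 hra
            have hs2 : s ^ (-a - 2) = s ^ (-a) / s ^ 2 := by
              rw [show (-a - 2 : ℝ) = -a - (2:ℕ) by norm_num, Real.rpow_sub hs0,
                Real.rpow_natCast]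
            have heq : s ^ (-a) * (4 / (s * c) ^ 2) = 4 * (c ^ 2)⁻¹ * s ^ (-a - 2) := by
              rw [hs2, mul_pow]
              field_simp
            exact heq ▸ h3
          have hint2 : IntegrableOn (fun s : ℝ => s ^ (-a - 2)) (Ioc u T) := by
            rw [hu]
            exact (intervalIntegral.intervalIntegrable_rpow (μ := volume)
              (a := 1/c) (b := T) (r := -a - 2)
              (Or.inr (notMem_uIcc_of_lt hinvc hT))).1
          have s1 : ∫ s in Ioc u T, f s
              ≤ ∫ s in Ioc u T, 4 * (c ^ 2)⁻¹ * s ^ (-a - 2) := by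
            apply setIntegral_mono_on ((hfint T).mono_set (Ioc_subset_Ioc_left hu0.le))
              (hint2.const_mul _) measurableSet_Ioc hpt
          have hne : (-a - 2 : ℝ) ≠ -1 := by intro h; linarith
          have s2 : ∫ s in Ioc u T, (s:ℝ) ^ (-a - 2)
              = (c ^ (a + 1) - T ^ (-a - 1)) / (a + 1) := by
            rw [hu, ← intervalIntegral.integral_of_le hTc.le,
              integral_rpow
                (Or.inr ⟨hne, notMem_uIcc_of_lt hinvc hT⟩)]
            have e1 : (-a - 2 + 1 : ℝ) = -(a + 1) := by ring
            have e2 : (1/c : ℝ) ^ (-(a + 1)) = c ^ (a + 1) := by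
              rw [one_div, Real.inv_rpow hc0.le, Real.rpow_neg hc0.le, inv_inv]
            have e3 : (T : ℝ) ^ (-(a + 1)) = T ^ (-a - 1) := by
              rw [show (-(a + 1) : ℝ) = -a - 1 by ring]
            rw [e1, e2, e3, div_neg, ← neg_div, neg_sub]
          have s3 : (c ^ (a + 1) - T ^ (-a - 1)) / (a + 1) ≤ c ^ (a + 1) / (a + 1) := by
            have hTpow : (0:ℝ) ≤ T ^ (-a - 1) := Real.rpow_nonneg hT.le _
            gcongr
            linarith
          have s4 : (c ^ 2)⁻¹ * c ^ (a + 1) = c ^ (a - 1) := by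
            have h : c ^ (a + 1) = c ^ (a - 1) * c ^ (2:ℕ) := by
              rw [← Real.rpow_natCast c 2, ← Real.rpow_add hc0]
              congr 1
              push_cast
              ring
            rw [h, mul_comm (c ^ (a-1)) _, ← mul_assoc,
              inv_mul_cancel₀ (by positivity), one_mul]
          calc ∫ s in Ioc u T, f s
              ≤ ∫ s in Ioc u T, 4 * (c ^ 2)⁻¹ * s ^ (-a - 2) := s1
            _ = 4 * (c ^ 2)⁻¹ * ((c ^ (a + 1) - T ^ (-a - 1)) / (a + 1)) := by
                rw [integral_const_mul, s2]
            _ ≤ 4 * (c ^ 2)⁻¹ * (c ^ (a + 1) / (a + 1)) := by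
                apply mul_le_mul_of_nonneg_left s3 (by positivity)
            _ = (4 / (a + 1)) * ((c ^ 2)⁻¹ * c ^ (a + 1)) := by ring
            _ = (4 / (a + 1)) * c ^ (a - 1) := by rw [s4]
      calc ∫ s in Ioc (0:ℝ) T, f s
          = (∫ s in Ioc (0:ℝ) u, f s) + ∫ s in Ioc u T, f s := hsplit
        _ ≤ (1 / (1 - a)) * c ^ (a - 1) + (4 / (a + 1)) * c ^ (a - 1) :=
            add_le_add piece1 piece2
        _ = (1 / (1 - a) + 4 / (a + 1)) * c ^ (a - 1) := by ring
        _ ≤ k₂ * c ^ (a - 1) :=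
            mul_le_mul_of_nonneg_right (le_max_left _ _) hcpow.le
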